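/- Let n be a positive integer and consider a directed weighted graph on n nodes with nonnegative weight matrix W (W i j ≥ 0 for all i, j). Then every complex eigenvalue of the graph advection operator L_adv has nonnegative real part: if x ∈ ℂⁿ is nonzero and (L_adv regarded as a complex matrix) satisfies L_adv x = μ x for some μ ∈ ℂ, then Re(μ) ≥ 0. -/

import Mathlib

open Matrix BigOperators

/-- Graph advection operator `L_adv = D_out - A_in`, where `A_in = W` and
`(D_out) i i = ∑ j, W j i`. -/
def Ladv (n : ℕ) (W : Matrix (Fin n) (Fin n) ℝ) : Matrix (Fin n) (Fin n) ℝ :=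
  Matrix.diagonal (fun i => ∑ j, W j i) - W

/-- For nonnegative weights, every complex eigenvalue of `L_adv` (regarded as a
complex matrix via `ℝ → ℂ`) has nonnegative real part. -/
theorem stmt4 (n : ℕ) (hn : 0 < n) (W : Matrix (Fin n) (Fin n) ℝ)
    (hW : ∀ i j, 0 ≤ W i j) (μ : ℂ) (x : Fin n → ℂ) (hx : x ≠ 0)
    (heig : (Ladv n W).map (Complex.ofReal) *ᵥ x = μ • x) :
    0 ≤ μ.re := by
  set A : Matrix (Fin n) (Fin n) ℂ := (Ladv n W).map (Complex.ofReal) with hA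
  -- det (A - μ•1) = 0
  have hdet : (A - μ • 1).det = 0 := by
    rw [← Matrix.exists_mulVec_eq_zero_iff]
    refine ⟨x, hx, ?_⟩
    rw [Matrix.sub_mulVec, heig, Matrix.smul_mulVec, Matrix.one_mulVec, sub_self]
  -- transpose has μ as eigenvalue
  have hdetT : (Aᵀ - μ • 1).det = 0 := by
    rw [show Aᵀ - μ • 1 = (A - μ • 1)ᵀ by simp [Matrix.transpose_sub, Matrix.transpose_smul],
      Matrix.det_transpose]
    exact hdet
  obtain ⟨y, hy, hAy⟩ := (Matrix.exists_mulVec_eq_zero_iff).mpr hdetT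
  have hyeig : Aᵀ *ᵥ y = μ • y := by
    have := hAy
    rw [Matrix.sub_mulVec, Matrix.smul_mulVec, Matrix.one_mulVec, sub_eq_zero] at this
    exact this
  have hev : Module.End.HasEigenvalue (Matrix.toLin' Aᵀ) μ := by
    refine Module.End.hasEigenvalue_of_hasEigenvector ⟨?_, hy⟩
    rw [Module.End.mem_eigenspace_iff, Matrix.toLin'_apply, hyeig]
  obtain ⟨k, hk⟩ := eigenvalue_mem_ball hev
  rw [Metric.mem_closedBall] at hk
  -- compute entries
  have hdiag : Aᵀ k k = ((∑ j, W j k : ℝ) - W k k : ℝ) := by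
    simp [hA, Ladv, Matrix.map_apply, Matrix.diagonal_apply_eq]
  have hoff : ∀ j, j ≠ k → ‖Aᵀ k j‖ = W j k := by
    intro j hj
    simp [hA, Ladv, Matrix.map_apply, Matrix.transpose_apply,
      Matrix.diagonal_apply_ne _ hj, abs_of_nonneg (hW j k)]
  have hsum : ∑ j ∈ Finset.univ.erase k, ‖Aᵀ k j‖ = ∑ j ∈ Finset.univ.erase k, W j k :=
    Finset.sum_congr rfl fun j hj => hoff j (Finset.ne_of_mem_erase hj)
  rw [hsum, hdiag] at hk
  have hre : |μ.re - ((∑ j, W j k) - W k k)| ≤ ∑ j ∈ Finset.univ.erase k, W j k := by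
    calc |μ.re - ((∑ j, W j k) - W k k)|
        = |(μ - (((∑ j, W j k) - W k k : ℝ) : ℂ)).re| := by
          simp [Complex.sub_re, Complex.ofReal_re]
      _ ≤ ‖μ - (((∑ j, W j k) - W k k : ℝ) : ℂ)‖ := Complex.abs_re_le_norm _
      _ = dist μ (((∑ j, W j k : ℝ) - W k k : ℝ) : ℂ) := (Complex.dist_eq _ _).symm
      _ ≤ _ := hk

  have hsplit : ∑ j, W j k = W k k + ∑ j ∈ Finset.univ.erase k, W j k := by
    rw [← Finset.add_sum_erase _ _ (Finset.mem_univ k)]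
  have := abs_le.mp hre
  linarith [this.1]
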